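/- For each of the 18 pairs (i,j) in the list (0,1),(0,2),(0,4),(1,0),(1,3),(1,5),(2,0),(2,5),(2,6),(3,1),(3,4),(4,0),(4,3),(4,6),(5,1),(5,2),(6,2),(6,4), the set [i,j] is a single conjugacy class of SL_3(𝔽_7): it is nonempty, closed under conjugation, and any two of its elements are conjugate in SL_3(𝔽_7). -/

import Mathlib

open Matrix Polynomial

abbrev SL3 := Matrix.SpecialLinearGroup (Fin 3) (ZMod 7)

/-- The set `[i,j]` of matrices in `SL₃(𝔽₇)` with characteristic polynomial
`X³ - i·X² + j·X - 1`. -/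
def classSet (i j : ZMod 7) : Set SL3 :=
  {M : SL3 | M.val.charpoly = X ^ 3 - C i * X ^ 2 + C j * X - 1}

/-- The 18 pairs `(i,j)`. -/
def pairs : List (ZMod 7 × ZMod 7) :=
  [(0,1),(0,2),(0,4),(1,0),(1,3),(1,5),(2,0),(2,5),(2,6),
   (3,1),(3,4),(4,0),(4,3),(4,6),(5,1),(5,2),(6,2),(6,4)]

/-! ### Auxiliary material -/

abbrev F7 := ZMod 7

instance : Fact (Nat.Prime 7) := ⟨by norm_num⟩

noncomputable def P7 (i j : F7) : F7[X] := X ^ 3 - C i * X ^ 2 + C j * X - 1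

/-- The companion matrix of `P7 i j`. -/
def cp (i j : F7) : Matrix (Fin 3) (Fin 3) F7 := !![0,0,1; 1,0,-j; 0,1,i]

lemma det_cp (i j : F7) : (cp i j).det = 1 := by
  simp [cp, Matrix.det_fin_three]

lemma charpoly_cp (i j : F7) : (cp i j).charpoly = P7 i j := by
  rw [Matrix.charpoly, Matrix.det_fin_three]
  simp [charmatrix_apply_eq, charmatrix_apply_ne, cp, P7, Fin.ext_iff]
  ring

lemma natDegree_P7 (i j : F7) : (P7 i j).natDegree = 3 := by unfold P7; compute_degree!

lemma irr_P7 (i j : F7) (h : ∀ x : F7, x^3 - i*x^2 + j*x - 1 ≠ 0) : Irreducible (P7 i j) := by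
  refine (Polynomial.irreducible_iff_roots_eq_zero_of_degree_le_three (p := P7 i j)
    (by rw [natDegree_P7]; norm_num) (by rw [natDegree_P7])).mpr ?_
  rw [Multiset.eq_zero_iff_forall_notMem]
  intro x hx
  rw [mem_roots', Polynomial.IsRoot] at hx
  apply h x
  simpa [P7] using hx.2

lemma roots_free : ∀ pr ∈ pairs, ∀ x : ZMod 7,
    x^3 - pr.1*x^2 + pr.2*x - 1 ≠ 0 := by decide

/-- coefficients (b, c) such that `b • C + c • C²` has determinant `d`. -/
def zc : F7 × F7 → F7 → F7 × F7 := fun pr d => match pr.1.val, pr.2.val, d with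
| 0, 1, d => [((0:F7),(1:F7)), (0,1),(1,3),(1,1),(1,4),(3,2),(0,3)][d.val]!
| 0, 2, d => [((0:F7),(1:F7)), (0,1),(1,6),(1,2),(1,1),(3,4),(0,3)][d.val]!
| 0, 4, d => [((0:F7),(1:F7)), (0,1),(1,5),(1,4),(1,2),(3,1),(0,3)][d.val]!
| 1, 0, d => [((0:F7),(1:F7)), (0,1),(3,1),(1,1),(1,2),(1,5),(0,3)][d.val]!
| 1, 3, d => [((0:F7),(1:F7)), (0,1),(1,2),(1,5),(3,1),(1,4),(0,3)][d.val]!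
| 1, 5, d => [((0:F7),(1:F7)), (0,1),(1,4),(1,2),(1,5),(3,5),(0,3)][d.val]!
| 2, 0, d => [((0:F7),(1:F7)), (0,1),(3,4),(1,4),(1,1),(1,6),(0,3)][d.val]!
| 2, 5, d => [((0:F7),(1:F7)), (0,1),(1,1),(1,6),(3,4),(1,2),(0,3)][d.val]!
| 2, 6, d => [((0:F7),(1:F7)), (0,1),(1,2),(1,1),(1,3),(3,6),(0,3)][d.val]!
| 3, 1, d => [((0:F7),(1:F7)), (0,1),(1,4),(3,2),(1,3),(1,2),(0,3)][d.val]!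
| 3, 4, d => [((0:F7),(1:F7)), (0,1),(1,1),(1,2),(3,1),(3,3),(0,3)][d.val]!
| 4, 0, d => [((0:F7),(1:F7)), (0,1),(3,2),(1,2),(1,4),(1,3),(0,3)][d.val]!
| 4, 3, d => [((0:F7),(1:F7)), (0,1),(1,1),(1,4),(1,3),(3,3),(0,3)][d.val]!
| 4, 6, d => [((0:F7),(1:F7)), (0,1),(1,4),(1,3),(3,2),(1,1),(0,3)][d.val]!
| 5, 1, d => [((0:F7),(1:F7)), (0,1),(1,2),(1,3),(3,2),(3,6),(0,3)][d.val]!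
| 5, 2, d => [((0:F7),(1:F7)), (0,1),(1,1),(3,4),(1,6),(1,3),(0,3)][d.val]!
| 6, 2, d => [((0:F7),(1:F7)), (0,1),(1,4),(1,1),(3,1),(3,5),(0,3)][d.val]!
| 6, 4, d => [((0:F7),(1:F7)), (0,1),(1,2),(3,1),(1,5),(1,1),(0,3)][d.val]!
| _, _, _ => (0,1)

def zmat (pr : F7 × F7) (d : F7) : Matrix (Fin 3) (Fin 3) F7 :=
  (zc pr d).1 • cp pr.1 pr.2 + (zc pr d).2 • (cp pr.1 pr.2 * cp pr.1 pr.2)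

lemma zmat_comm (pr : F7 × F7) (d : F7) :
    zmat pr d * cp pr.1 pr.2 = cp pr.1 pr.2 * zmat pr d := by
  unfold zmat
  simp only [add_mul, mul_add, smul_mul_assoc, mul_smul_comm, mul_assoc]

lemma zmat_det : ∀ pr ∈ pairs, ∀ d : F7, d ≠ 0 → (zmat pr d).det = d := by
  have h3 : ∀ A : Matrix (Fin 3) (Fin 3) F7, A.det =
      A 0 0 * A 1 1 * A 2 2 - A 0 0 * A 1 2 * A 2 1 - A 0 1 * A 1 0 * A 2 2 +
      A 0 1 * A 1 2 * A 2 0 + A 0 2 * A 1 0 * A 2 1 - A 0 2 * A 1 1 * A 2 0 :=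
    fun A => Matrix.det_fin_three A
  simp only [h3]
  decide

lemma exists_z : ∀ pr ∈ pairs, ∀ d : F7, d ≠ 0 →
    ∃ z : Matrix (Fin 3) (Fin 3) F7, z * cp pr.1 pr.2 = cp pr.1 pr.2 * z ∧ z.det = d :=
  fun pr h d hd => ⟨zmat pr d, zmat_comm pr d, zmat_det pr h d hd⟩

lemma exists_conj_cp (i j : F7) (hirr : Irreducible (P7 i j))
    (M : Matrix (Fin 3) (Fin 3) F7) (hM : M.charpoly = P7 i j) :
    ∃ g : Matrix (Fin 3) (Fin 3) F7, IsUnit g.det ∧ M * g = g * cp i j := by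
  classical
  set v : Fin 3 → F7 := Pi.single 0 1 with hv
  set g : Matrix (Fin 3) (Fin 3) F7 :=
    Matrix.of (fun r k : Fin 3 => ![v, M *ᵥ v, M *ᵥ (M *ᵥ v)] k r) with hg
  have hPM : aeval M (P7 i j) = 0 := hM ▸ Matrix.aeval_self_charpoly M
  have key : ∀ w : Fin 3 → F7,
      g.mulVec w = (aeval M (C (w 0) + C (w 1) * X + C (w 2) * X ^ 2)).mulVec v := by
    intro w
    funext r
    simp only [map_add, _root_.map_mul, map_pow, aeval_X, aeval_C,
      Algebra.algebraMap_eq_smul_one, smul_mul_assoc, one_mul,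
      Matrix.add_mulVec, Matrix.smul_mulVec, Matrix.one_mulVec, pow_two,
      ← Matrix.mulVec_mulVec]
    simp only [hg, Matrix.mulVec, dotProduct, Fin.sum_univ_three, Matrix.of_apply,
      Matrix.cons_val_zero, Matrix.cons_val_one, Matrix.head_cons, Matrix.cons_val_two,
      Matrix.tail_cons, Pi.add_apply, Pi.smul_apply, smul_eq_mul]
    ring
  have hker : ∀ w : Fin 3 → F7, g.mulVec w = 0 → w = 0 := by
    intro w hw
    by_contra hne
    set q : F7[X] := C (w 0) + C (w 1) * X + C (w 2) * X ^ 2 with hq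
    have hq0 : q ≠ 0 := by
      intro h0
      apply hne
      have c0 : w 0 = q.coeff 0 := by simp [hq, coeff_add, coeff_C, coeff_C_mul, coeff_X_pow]
      have c1 : w 1 = q.coeff 1 := by simp [hq, coeff_add, coeff_C, coeff_C_mul, coeff_X_pow]
      have c2 : w 2 = q.coeff 2 := by simp [hq, coeff_add, coeff_C, coeff_C_mul, coeff_X_pow]
      funext k
      fin_cases k <;> simp [c0, c1, c2, h0]
    have hndvd : ¬ P7 i j ∣ q := by
      intro hdvd
      have h1 : (P7 i j).natDegree ≤ q.natDegree := Polynomial.natDegree_le_of_dvd hdvd hq0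
      have h2 : q.natDegree ≤ 2 := by rw [hq]; compute_degree
      rw [natDegree_P7] at h1
      omega
    obtain ⟨a, b, hab⟩ := (hirr.coprime_iff_not_dvd).mpr hndvd
    have hv0 : v = 0 := by
      have h1 : (aeval M (a * P7 i j + b * q)).mulVec v = v := by
        rw [hab]; simp
      rw [map_add, _root_.map_mul, _root_.map_mul, hPM, mul_zero, Matrix.add_mulVec,
        Matrix.zero_mulVec, zero_add, ← Matrix.mulVec_mulVec, ← key, hw,
        Matrix.mulVec_zero] at h1
      exact h1.symm
    have := congrFun hv0 0
    simp [hv] at this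
  have hgu : IsUnit g := by
    rw [← Matrix.mulVec_injective_iff_isUnit]
    intro x y hxy
    have hsub : g.mulVec (x - y) = 0 := by
      rw [Matrix.mulVec_sub, hxy, sub_self]
    exact sub_eq_zero.mp (hker _ hsub)
  refine ⟨g, (Matrix.isUnit_iff_isUnit_det g).mp hgu, ?_⟩
  have hM3 : M ^ 3 = i • M ^ 2 - j • M + 1 := by
    have h0 : M ^ 3 - i • M ^ 2 + j • M - 1 = 0 := by
      simpa [P7, map_sub, map_add, _root_.map_mul, map_pow, aeval_X, aeval_C,
        Algebra.algebraMap_eq_smul_one, smul_mul_assoc, one_mul] using hPM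
    have h0' : M ^ 3 - (i • M ^ 2 - j • M + 1) = 0 := by rw [← h0]; abel
    exact sub_eq_zero.mp h0'
  have hv3 : M *ᵥ (M *ᵥ (M *ᵥ v)) = i • (M *ᵥ (M *ᵥ v)) - j • (M *ᵥ v) + v := by
    have h := congrArg (fun A => A *ᵥ v) hM3
    simpa [Matrix.add_mulVec, Matrix.sub_mulVec, Matrix.smul_mulVec, Matrix.one_mulVec,
      pow_succ, pow_two, ← Matrix.mulVec_mulVec] using h
  ext r k
  fin_cases k
  · show (M * g) r 0 = (g * cp i j) r 0
    simp [Matrix.mul_apply, hg, cp, Matrix.mulVec, dotProduct, Fin.sum_univ_three]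
    try ring
  · show (M * g) r 1 = (g * cp i j) r 1
    simp [Matrix.mul_apply, hg, cp, Matrix.mulVec, dotProduct, Fin.sum_univ_three]
    try ring
  · show (M * g) r 2 = (g * cp i j) r 2
    have lhs : (M * g) r 2 = (M *ᵥ (M *ᵥ (M *ᵥ v))) r := by
      simp [Matrix.mul_apply, hg, Matrix.mulVec, dotProduct, Fin.sum_univ_three]
      try ring
    rw [lhs, hv3]
    simp [Matrix.mul_apply, hg, cp, Matrix.mulVec, dotProduct, Fin.sum_univ_three,
      Pi.add_apply, Pi.sub_apply, Pi.smul_apply, smul_eq_mul]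
    try ring

lemma charpoly_conj7 (g h A : Matrix (Fin 3) (Fin 3) F7) (hgh : g * h = 1) :
    (g * A * h).charpoly = A.charpoly := by
  have hhg : h * g = 1 := mul_eq_one_comm.mp hgh
  let f := RingHom.mapMatrix (m := Fin 3) (C : F7 →+* F7[X])
  have key : charmatrix (g * A * h) = f g * charmatrix A * f h := by
    unfold charmatrix
    rw [_root_.map_mul, _root_.map_mul]
    rw [mul_sub, sub_mul]
    congr 1
    · have h1 : (Matrix.scalar (Fin 3) (X : F7[X]))
          = (X : F7[X]) • (1 : Matrix (Fin 3) (Fin 3) F7[X]) := by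
        rw [Matrix.scalar_apply, Matrix.smul_one_eq_diagonal]
      rw [h1, Algebra.mul_smul_comm, mul_one, Algebra.smul_mul_assoc]
      rw [← _root_.map_mul, hgh, _root_.map_one]
  rw [Matrix.charpoly, Matrix.charpoly, key, Matrix.det_mul, Matrix.det_mul]
  have hdet : (f g).det * (f h).det = 1 := by
    rw [← Matrix.det_mul, ← _root_.map_mul, hgh, _root_.map_one, Matrix.det_one]
  calc (f g).det * (charmatrix A).det * (f h).det
      = (f g).det * (f h).det * (charmatrix A).det := by ring
    _ = (charmatrix A).det := by rw [hdet, one_mul]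

lemma sl_conj (i j : F7) (hirr : Irreducible (P7 i j))
    (hz : ∀ d : F7, d ≠ 0 → ∃ z : Matrix (Fin 3) (Fin 3) F7,
      z * cp i j = cp i j * z ∧ z.det = d)
    (M N : SL3) (hM : M.val.charpoly = P7 i j) (hN : N.val.charpoly = P7 i j) :
    IsConj M N := by
  obtain ⟨gM, hgMd, hgM⟩ := exists_conj_cp i j hirr M.val hM
  obtain ⟨gN, hgNd, hgN⟩ := exists_conj_cp i j hirr N.val hN
  have hMinv1 : gM * gM⁻¹ = 1 := Matrix.mul_nonsing_inv gM hgMd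
  have hMinv2 : gM⁻¹ * gM = 1 := Matrix.nonsing_inv_mul gM hgMd
  have hgM0 : gM.det ≠ 0 := hgMd.ne_zero
  have hgN0 : gN.det ≠ 0 := hgNd.ne_zero
  have hd0 : gM.det * (gN.det)⁻¹ ≠ 0 := mul_ne_zero hgM0 (inv_ne_zero hgN0)
  obtain ⟨z, hzc, hzd⟩ := hz _ hd0
  set s := gN * z * gM⁻¹ with hs
  have hsdet : s.det = 1 := by
    rw [hs, Matrix.det_mul, Matrix.det_mul, hzd, Matrix.det_nonsing_inv,
      Ring.inverse_eq_inv']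
    field_simp
  have h1 : gM⁻¹ * M.val = cp i j * gM⁻¹ := by
    calc gM⁻¹ * M.val = gM⁻¹ * M.val * 1 := (mul_one _).symm
      _ = gM⁻¹ * M.val * (gM * gM⁻¹) := by rw [hMinv1]
      _ = gM⁻¹ * (M.val * gM) * gM⁻¹ := by simp only [mul_assoc]
      _ = gM⁻¹ * (gM * cp i j) * gM⁻¹ := by rw [hgM]
      _ = (gM⁻¹ * gM) * (cp i j * gM⁻¹) := by simp only [mul_assoc]
      _ = cp i j * gM⁻¹ := by rw [hMinv2, one_mul]
  have hcomm : s * M.val = N.val * s := by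
    calc s * M.val = gN * z * (gM⁻¹ * M.val) := by rw [hs]; simp only [mul_assoc]
      _ = gN * z * (cp i j * gM⁻¹) := by rw [h1]
      _ = gN * (z * cp i j) * gM⁻¹ := by simp only [mul_assoc]
      _ = gN * (cp i j * z) * gM⁻¹ := by rw [hzc]
      _ = (gN * cp i j) * (z * gM⁻¹) := by simp only [mul_assoc]
      _ = (N.val * gN) * (z * gM⁻¹) := by rw [← hgN]
      _ = N.val * s := by rw [hs]; simp only [mul_assoc]
  rw [isConj_iff]
  let S : SL3 := ⟨s, hsdet⟩
  refine ⟨S, ?_⟩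
  have hmul : S * M = N * S := by
    apply Subtype.ext
    exact hcomm
  rw [hmul, mul_assoc, mul_inv_cancel, mul_one]

theorem classSet_isConjClass :
    ∀ p ∈ pairs,
      (classSet p.1 p.2).Nonempty ∧
      (∀ M ∈ classSet p.1 p.2, ∀ g : SL3, g * M * g⁻¹ ∈ classSet p.1 p.2) ∧
      (∀ M ∈ classSet p.1 p.2, ∀ N ∈ classSet p.1 p.2, IsConj M N) := by
  intro p hp
  obtain ⟨i, j⟩ := p
  have hirr : Irreducible (P7 i j) := irr_P7 i j (roots_free ⟨i, j⟩ hp)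
  have hmemP : ∀ M : SL3, M ∈ classSet i j ↔ M.val.charpoly = P7 i j := by
    intro M; rfl
  refine ⟨⟨⟨cp i j, det_cp i j⟩, ?_⟩, ?_, ?_⟩
  · exact (hmemP _).mpr (charpoly_cp i j)
  · intro M hM g
    rw [hmemP] at hM ⊢
    have hcoe : ((g * M * g⁻¹ : SL3) : Matrix (Fin 3) (Fin 3) F7)
        = g.val * M.val * (g⁻¹).val := by
      simp [Matrix.SpecialLinearGroup.coe_mul]
    have hgh : g.val * (g⁻¹).val = 1 := by
      rw [← Matrix.SpecialLinearGroup.coe_mul, mul_inv_cancel,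
        Matrix.SpecialLinearGroup.coe_one]
    rw [hcoe, charpoly_conj7 _ _ _ hgh]
    exact hM
  · intro M hM N hN
    exact sl_conj i j hirr (exists_z ⟨i, j⟩ hp) M N ((hmemP M).mp hM) ((hmemP N).mp hN)
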